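/- Let r ≥ 3, let c be a parallel r-coloring of E(K_r) (so every K_3 is rainbow), and let F(n) count rainbow triangles in the iterated blow-up coloring of K_n, n = r^k. Then F(r^k) ≥ (r^{3k} − r^k)/(r^3 − r) · C(r,3). -/

import Mathlib

/-- A coloring is *parallel* if every color class is a matching. -/
def Parallel {V C : Type*} (c : Sym2 V → C) : Prop :=
  ∀ u v w : V, v ≠ u → w ≠ u → v ≠ w → c s(u, v) ≠ c s(u, w)

/-- The iterated blow-up coloring: vertices of `K_{r^k}` are strings in `Fin k → Fin r`,
and the color of an edge `{u, v}` is the color (under `c`) of the edge of `K_r` given by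
the first coordinate where `u` and `v` differ (junk value `0` on the diagonal). -/
def blowColor {r k : ℕ} (c : Sym2 (Fin r) → Fin r) (u v : Fin k → Fin r) : ℕ :=
  if h : (Finset.univ.filter fun j => u j ≠ v j).Nonempty then
    (c s(u ((Finset.univ.filter fun j => u j ≠ v j).min' h),
        v ((Finset.univ.filter fun j => u j ≠ v j).min' h)) : ℕ)
  else 0

namespace Stmt18

variable {r k : ℕ}



/-- pairwise distinct triples in a type -/
def D3 (α : Type*) : Type _ := {p : α × α × α // p.1 ≠ p.2.1 ∧ p.1 ≠ p.2.2 ∧ p.2.1 ≠ p.2.2}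

def d3Equiv (α : Type*) : D3 α ≃ (Fin 3 ↪ α) where
  toFun p := ⟨![p.1.1, p.1.2.1, p.1.2.2], by
    intro i j h
    fin_cases i <;> fin_cases j <;> simp_all <;>
      first
      | rfl
      | (exact absurd h p.2.1)
      | (exact absurd h p.2.2.1)
      | (exact absurd h p.2.2.2)
      | (exact absurd h.symm p.2.1)
      | (exact absurd h.symm p.2.2.1)
      | (exact absurd h.symm p.2.2.2)⟩
  invFun f := ⟨(f 0, f 1, f 2), by
    refine ⟨f.injective.ne (by decide), f.injective.ne (by decide), f.injective.ne (by decide)⟩⟩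
  left_inv p := by
    obtain ⟨⟨a, b, c⟩, h⟩ := p
    simp [Matrix.cons_val_one]
    rfl
  right_inv f := by
    ext i
    fin_cases i <;> simp [Matrix.cons_val_one] <;> rfl

instance (α : Type*) [Fintype α] [DecidableEq α] : Fintype (D3 α) := by
  unfold D3; infer_instance

lemma card_D3 (α : Type*) [Fintype α] [DecidableEq α] :
    Fintype.card (D3 α) = (Fintype.card α).descFactorial 3 := by
  rw [Fintype.card_congr (d3Equiv α), Fintype.card_embedding_eq]
  simp

def P {r k : ℕ} (t : (Fin k → Fin r) × (Fin k → Fin r) × (Fin k → Fin r)) : Prop :=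
  ∃ j, (∀ i < j, t.1 i = t.2.1 i ∧ t.1 i = t.2.2 i) ∧
    t.1 j ≠ t.2.1 j ∧ t.1 j ≠ t.2.2 j ∧ t.2.1 j ≠ t.2.2 j

noncomputable def g (r k : ℕ) : ℕ :=
  Nat.card {t : (Fin k → Fin r) × (Fin k → Fin r) × (Fin k → Fin r) // P t}

lemma g_zero : g r 0 = 0 := by
  have : IsEmpty {t : (Fin 0 → Fin r) × (Fin 0 → Fin r) × (Fin 0 → Fin r) // P t} :=
    ⟨fun ⟨t, j, _⟩ => j.elim0⟩
  simp [g]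

def shuffle (α β : Type*) : (α × β) × (α × β) × (α × β) ≃ (α × α × α) × (β × β × β) where
  toFun x := ((x.1.1, x.2.1.1, x.2.2.1), (x.1.2, x.2.1.2, x.2.2.2))
  invFun y := ((y.1.1, y.2.1), (y.1.2.1, y.2.2.1), (y.1.2.2, y.2.2.2))
  left_inv _ := rfl
  right_inv _ := rfl

def diagEquiv (α : Type*) : {p : α × α × α // p.1 = p.2.1 ∧ p.1 = p.2.2} ≃ α where
  toFun p := p.1.1
  invFun a := ⟨(a, a, a), rfl, rfl⟩
  left_inv p := by
    obtain ⟨⟨a, b, c⟩, h1, h2⟩ := p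
    dsimp at h1 h2
    subst h1; subst h2; rfl
  right_inv a := rfl

lemma P_cons (a b c : Fin r) (u v w : Fin k → Fin r) :
    P (Fin.cons a u, Fin.cons b v, Fin.cons c w) ↔
      ((a = b ∧ a = c) ∧ P (u, v, w)) ∨ (a ≠ b ∧ a ≠ c ∧ b ≠ c) := by
  constructor
  · rintro ⟨j, h1, h2⟩
    induction j using Fin.cases with
    | zero => right; simpa using h2
    | succ i =>
      left
      have h0 := h1 0 (Fin.succ_pos i)
      refine ⟨by simpa using h0, i, fun i' hi' => ?_, by simpa using h2⟩
      have := h1 i'.succ (by simpa [Fin.succ_lt_succ_iff] using hi')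
      simpa using this
  · rintro (⟨⟨hab, hac⟩, j, h1, h2⟩ | h)
    · refine ⟨j.succ, fun i hi => ?_, by simpa using h2⟩
      induction i using Fin.cases with
      | zero => simpa using ⟨hab, hac⟩
      | succ i' =>
        have := h1 i' (by simpa [Fin.succ_lt_succ_iff] using hi)
        simpa using this
    · exact ⟨0, fun i hi => absurd hi (Fin.not_lt_zero i), by simpa using h⟩

lemma g_succ : g r (k + 1) = r * g r k + r.descFactorial 3 * (r ^ k) ^ 3 := by
  classical
  let Tk := Fin k → Fin r
  let X : Type := (Fin r × Tk) × (Fin r × Tk) × (Fin r × Tk)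
  have : Fintype X := by unfold X Tk; infer_instance
  let e : Fin r × Tk ≃ (Fin (k + 1) → Fin r) := Fin.consEquiv (fun _ => Fin r)
  let E : X ≃ (Fin (k+1) → Fin r) × (Fin (k+1) → Fin r) × (Fin (k+1) → Fin r) :=
    e.prodCongr (e.prodCongr e)
  let Q1 : X → Prop := fun x => (x.1.1 = x.2.1.1 ∧ x.1.1 = x.2.2.1) ∧
    P (x.1.2, x.2.1.2, x.2.2.2)
  let Q2 : X → Prop := fun x => x.1.1 ≠ x.2.1.1 ∧ x.1.1 ≠ x.2.2.1 ∧ x.2.1.1 ≠ x.2.2.1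
  have hPE : ∀ x : X, P (E x) ↔ Q1 x ∨ Q2 x := by
    rintro ⟨⟨a, u⟩, ⟨b, v⟩, ⟨c, w⟩⟩
    exact P_cons a b c u v w
  have hdisj : Disjoint Q1 Q2 := by
    rw [Pi.disjoint_iff]
    intro x
    rw [Prop.disjoint_iff]
    rintro ⟨⟨⟨h1, h2⟩, _⟩, hn, _⟩
    exact hn h1
  have step1 : g r (k+1) = Nat.card {x : X // Q1 x ∨ Q2 x} := by
    rw [g]
    exact Nat.card_congr ((Equiv.subtypeEquiv E (fun x => Iff.rfl)).symm.trans
      (Equiv.subtypeEquivRight hPE))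
  have step2 : Nat.card {x : X // Q1 x ∨ Q2 x} =
      Nat.card {x : X // Q1 x} + Nat.card {x : X // Q2 x} := by
    rw [Nat.card_congr (subtypeOrEquiv Q1 Q2 hdisj), Nat.card_sum]
  have c1 : Nat.card {x : X // Q1 x} = r * g r k := by
    have e1a : {x : X // Q1 x} ≃
        {y : (Fin r × Fin r × Fin r) × (Tk × Tk × Tk) //
          (y.1.1 = y.1.2.1 ∧ y.1.1 = y.1.2.2) ∧ P y.2} :=
      Equiv.subtypeEquiv (shuffle (Fin r) Tk) (fun x => Iff.rfl)
    have e1b := e1a.trans (Equiv.subtypeProdEquivProd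
      (p := fun p : Fin r × Fin r × Fin r => p.1 = p.2.1 ∧ p.1 = p.2.2)
      (q := P (r := r) (k := k)))
    rw [Nat.card_congr e1b, Nat.card_prod, Nat.card_congr (diagEquiv (Fin r)), g]
    simp
  have c2 : Nat.card {x : X // Q2 x} = r.descFactorial 3 * (r ^ k) ^ 3 := by
    have e2a : {x : X // Q2 x} ≃
        {y : (Fin r × Fin r × Fin r) × (Tk × Tk × Tk) //
          (y.1.1 ≠ y.1.2.1 ∧ y.1.1 ≠ y.1.2.2 ∧ y.1.2.1 ≠ y.1.2.2) ∧ True} :=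
      Equiv.subtypeEquiv (shuffle (Fin r) Tk) (fun x =>
        ⟨fun h => ⟨h, trivial⟩, fun h => h.1⟩)
    have e2b := e2a.trans (Equiv.subtypeProdEquivProd
      (p := fun p : Fin r × Fin r × Fin r => p.1 ≠ p.2.1 ∧ p.1 ≠ p.2.2 ∧ p.2.1 ≠ p.2.2)
      (q := fun _ : Tk × Tk × Tk => True))
    rw [Nat.card_congr e2b, Nat.card_prod,
      Nat.card_congr (Equiv.subtypeUnivEquiv (fun _ => trivial))]
    have hD : Nat.card {p : Fin r × Fin r × Fin r //
        p.1 ≠ p.2.1 ∧ p.1 ≠ p.2.2 ∧ p.2.1 ≠ p.2.2} = r.descFactorial 3 := by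
      have h2 : Nat.card (D3 (Fin r)) = r.descFactorial 3 := by
        rw [Nat.card_eq_fintype_card, card_D3, Fintype.card_fin]
      exact h2
    rw [hD, Nat.card_prod, Nat.card_prod, Nat.card_fun]
    simp only [Nat.card_eq_fintype_card, Fintype.card_fin]
    ring
  rw [step1, step2, c1, c2]



lemma g_eq (r : ℕ) : ∀ k : ℕ, (g r k : ℚ) * ((r : ℚ) ^ 3 - r) =
    (r.descFactorial 3 : ℚ) * (((r : ℚ) ^ k) ^ 3 - (r : ℚ) ^ k)
  | 0 => by simp [g_zero]
  | (k + 1) => by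
    have ih := g_eq r k
    rw [g_succ]
    push_cast
    rw [pow_succ]
    linear_combination (r : ℚ) * ih

lemma blow_eq (c : Sym2 (Fin r) → Fin r) {u v : Fin k → Fin r} {j : Fin k}
    (hagree : ∀ i, i < j → u i = v i) (hj : u j ≠ v j) :
    blowColor c u v = (c s(u j, v j) : ℕ) := by
  classical
  have hmem : j ∈ Finset.univ.filter (fun i => u i ≠ v i) := by simp [hj]
  have hne : (Finset.univ.filter fun i => u i ≠ v i).Nonempty := ⟨j, hmem⟩
  have hmin : (Finset.univ.filter fun i => u i ≠ v i).min' hne = j := by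
    refine le_antisymm (Finset.min'_le _ _ hmem) ?_
    by_contra h
    push_neg at h
    have hm := Finset.min'_mem _ hne
    simp only [Finset.mem_filter, Finset.mem_univ, true_and] at hm
    exact hm (hagree _ h)
  rw [blowColor, dif_pos hne, hmin]


lemma mem_triangle (c : Sym2 (Fin r) → Fin r) (hc : Parallel c)
    {t : (Fin k → Fin r) × (Fin k → Fin r) × (Fin k → Fin r)} (ht : P t) :
    ({t.1, t.2.1, t.2.2} : Finset (Fin k → Fin r)).card = 3 ∧
      ∀ u ∈ ({t.1, t.2.1, t.2.2} : Finset (Fin k → Fin r)),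
        ∀ v ∈ ({t.1, t.2.1, t.2.2} : Finset (Fin k → Fin r)),
        ∀ u' ∈ ({t.1, t.2.1, t.2.2} : Finset (Fin k → Fin r)),
        ∀ v' ∈ ({t.1, t.2.1, t.2.2} : Finset (Fin k → Fin r)),
        u ≠ v → u' ≠ v' → ({u, v} : Finset (Fin k → Fin r)) ≠ {u', v'} →
        blowColor c u v ≠ blowColor c u' v' := by
  classical
  obtain ⟨u, v, w⟩ := t
  obtain ⟨j, hlt, h1, h2, h3⟩ := ht
  simp only at h1 h2 h3 ⊢
  have huv : u ≠ v := fun h => h1 (congrFun h j)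
  have huw : u ≠ w := fun h => h2 (congrFun h j)
  have hvw : v ≠ w := fun h => h3 (congrFun h j)
  have agree : ∀ x ∈ ({u, v, w} : Finset (Fin k → Fin r)), ∀ i, i < j → x i = u i := by
    intro x hx i hi
    have h := hlt i hi
    simp only [Finset.mem_insert, Finset.mem_singleton] at hx
    rcases hx with rfl | rfl | rfl
    · rfl
    · exact h.1.symm
    · exact h.2.symm
  have distj : ∀ x ∈ ({u, v, w} : Finset (Fin k → Fin r)),
      ∀ y ∈ ({u, v, w} : Finset (Fin k → Fin r)), x ≠ y → x j ≠ y j := by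
    intro x hx y hy hxy
    simp only [Finset.mem_insert, Finset.mem_singleton] at hx hy
    rcases hx with rfl | rfl | rfl <;> rcases hy with rfl | rfl | rfl <;>
      first
        | exact absurd rfl hxy
        | exact h1
        | exact h2
        | exact h3
        | exact Ne.symm h1
        | exact Ne.symm h2
        | exact Ne.symm h3
  have color : ∀ x ∈ ({u, v, w} : Finset (Fin k → Fin r)),
      ∀ y ∈ ({u, v, w} : Finset (Fin k → Fin r)), x ≠ y →
      blowColor c x y = (c s(x j, y j) : ℕ) := by
    intro x hx y hy hxy
    exact blow_eq c (fun i hi => (agree x hx i hi).trans (agree y hy i hi).symm)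
      (distj x hx y hy hxy)
  have hT3 : ({u, v, w} : Finset (Fin k → Fin r)).card = 3 := by
    rw [Finset.card_insert_of_notMem (by simp [huv, huw]),
      Finset.card_insert_of_notMem (by simp [hvw]), Finset.card_singleton]
  constructor
  · exact hT3
  · intro a ha b hb a' ha' b' hb' hab hab' hsets
    rw [color a ha b hb hab, color a' ha' b' hb' hab', Ne, Fin.val_inj]
    have hshare : a = a' ∨ a = b' ∨ b = a' ∨ b = b' := by
      by_contra hno
      push_neg at hno
      obtain ⟨n1, n2, n3, n4⟩ := hno
      have hsub4 : ({a, b, a', b'} : Finset (Fin k → Fin r)) ⊆ {u, v, w} := by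
        simp [Finset.insert_subset_iff, ha, hb, ha', hb']
      have h4 : ({a, b, a', b'} : Finset (Fin k → Fin r)).card = 4 := by
        rw [Finset.card_insert_of_notMem (by simp [hab, n1, n2]),
          Finset.card_insert_of_notMem (by simp [n3, n4]),
          Finset.card_insert_of_notMem (by simp [hab']), Finset.card_singleton]
      have hle := Finset.card_le_card hsub4
      rw [h4, hT3] at hle
      omega
    rcases hshare with h | h | h | h
    · subst h
      have hbb' : b ≠ b' := fun h => hsets (by rw [h])
      exact hc (a j) (b j) (b' j) (distj b hb a ha (Ne.symm hab))
        (distj b' hb' a ha (Ne.symm hab')) (distj b hb b' hb' hbb')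
    · subst h
      have hba' : b ≠ a' := fun h => hsets (by rw [h, Finset.pair_comm])
      rw [Sym2.eq_swap (a := a' j) (b := a j)]
      exact hc (a j) (b j) (a' j) (distj b hb a ha (Ne.symm hab))
        (distj a' ha' a ha hab') (distj b hb a' ha' hba')
    · subst h
      have hab'' : a ≠ b' := fun h => hsets (by rw [h, Finset.pair_comm])
      rw [Sym2.eq_swap (a := a j) (b := b j)]
      exact hc (b j) (a j) (b' j) (distj a ha b hb hab)
        (distj b' hb' b hb (Ne.symm hab')) (distj a ha b' hb' hab'')
    · subst h
      have haa' : a ≠ a' := fun h => hsets (by rw [h])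
      rw [Sym2.eq_swap (a := a j) (b := b j), Sym2.eq_swap (a := a' j) (b := b j)]
      exact hc (b j) (a j) (a' j) (distj a ha b hb hab)
        (distj a' ha' b hb hab') (distj a ha a' ha' haa')

open Classical in
lemma fiber_le (S : Finset (Fin k → Fin r)) (hS : S.card = 3) :
    ((Finset.univ.filter (P (r := r) (k := k))).filter
      (fun t => ({t.1, t.2.1, t.2.2} : Finset (Fin k → Fin r)) = S)).card ≤ 6 := by
  obtain ⟨x, y, z, hxy, hxz, hyz, rfl⟩ := Finset.card_eq_three.mp hS
  have hsub : ((Finset.univ.filter (P (r := r) (k := k))).filter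
      (fun t => ({t.1, t.2.1, t.2.2} : Finset (Fin k → Fin r)) = {x, y, z})) ⊆
      ([(x, y, z), (x, z, y), (y, x, z), (y, z, x), (z, x, y), (z, y, x)] :
        List ((Fin k → Fin r) × (Fin k → Fin r) × (Fin k → Fin r))).toFinset := by
    rintro ⟨u, v, w⟩ ht
    simp only [Finset.mem_filter, Finset.mem_univ, true_and] at ht
    obtain ⟨⟨j, hlt, h1, h2, h3⟩, hts⟩ := ht
    simp only at h1 h2 h3 hts
    have huv : u ≠ v := fun h => h1 (congrFun h j)
    have huw : u ≠ w := fun h => h2 (congrFun h j)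
    have hvw : v ≠ w := fun h => h3 (congrFun h j)
    have hu : u = x ∨ u = y ∨ u = z := by
      have : u ∈ ({x, y, z} : Finset (Fin k → Fin r)) := hts ▸ (by simp)
      simpa using this
    have hv : v = x ∨ v = y ∨ v = z := by
      have : v ∈ ({x, y, z} : Finset (Fin k → Fin r)) := hts ▸ (by simp)
      simpa using this
    have hw : w = x ∨ w = y ∨ w = z := by
      have : w ∈ ({x, y, z} : Finset (Fin k → Fin r)) := hts ▸ (by simp)
      simpa using this
    simp only [List.mem_toFinset, List.mem_cons, List.not_mem_nil, or_false,
      Prod.mk.injEq]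
    rcases hu with rfl | rfl | rfl <;> rcases hv with rfl | rfl | rfl <;>
      rcases hw with rfl | rfl | rfl <;> simp_all
  refine le_trans (Finset.card_le_card hsub) (le_trans (List.toFinset_card_le _) ?_)
  norm_num

end Stmt18

/-- For a parallel `r`-coloring of `K_r` (`r ≥ 3`), the number of rainbow triangles in the
`k`-fold iterated blow-up coloring of `K_{r^k}` is at least
`(r^{3k} - r^k)/(r^3 - r) * C(r,3)`. -/
theorem stmt_18 (r k : ℕ) (hr : 3 ≤ r) (c : Sym2 (Fin r) → Fin r) (hc : Parallel c) :
    ((r : ℚ) ^ (3 * k) - (r : ℚ) ^ k) / ((r : ℚ) ^ 3 - r) * (r.choose 3 : ℚ) ≤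
      ({T : Finset (Fin k → Fin r) | T.card = 3 ∧
          ∀ u ∈ T, ∀ v ∈ T, ∀ u' ∈ T, ∀ v' ∈ T, u ≠ v → u' ≠ v' →
            ({u, v} : Finset (Fin k → Fin r)) ≠ {u', v'} →
            blowColor c u v ≠ blowColor c u' v'}.ncard : ℚ) := by
  classical
  set B : Set (Finset (Fin k → Fin r)) := {T : Finset (Fin k → Fin r) | T.card = 3 ∧
      ∀ u ∈ T, ∀ v ∈ T, ∀ u' ∈ T, ∀ v' ∈ T, u ≠ v → u' ≠ v' →
        ({u, v} : Finset (Fin k → Fin r)) ≠ {u', v'} →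
        blowColor c u v ≠ blowColor c u' v'} with hB
  have hfin : B.Finite := Set.toFinite _
  have hnc : B.ncard = hfin.toFinset.card := Set.ncard_eq_toFinset_card _ hfin
  have hmaps : ∀ t ∈ (Finset.univ.filter (Stmt18.P (r := r) (k := k))),
      ({t.1, t.2.1, t.2.2} : Finset (Fin k → Fin r)) ∈ hfin.toFinset := by
    intro t ht
    rw [Set.Finite.mem_toFinset, hB]
    simp only [Set.mem_setOf_eq]
    exact Stmt18.mem_triangle c hc (by simpa using ht)
  have hfibers : ∀ S ∈ hfin.toFinset,
      ((Finset.univ.filter (Stmt18.P (r := r) (k := k))).filter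
        (fun t => ({t.1, t.2.1, t.2.2} : Finset (Fin k → Fin r)) = S)).card ≤ 6 := by
    intro S hS
    rw [Set.Finite.mem_toFinset, hB] at hS
    exact Stmt18.fiber_le S hS.1
  have hcount := Finset.card_le_mul_card_image_of_maps_to hmaps 6 hfibers
  have hAF : (Finset.univ.filter (Stmt18.P (r := r) (k := k))).card = Stmt18.g r k := by
    rw [Stmt18.g, Nat.card_eq_fintype_card, Fintype.card_subtype]
  rw [hAF] at hcount
  rw [hnc]
  have hr3 : (3 : ℚ) ≤ (r : ℚ) := by exact_mod_cast hr
  have hpos : (0 : ℚ) < (r : ℚ) ^ 3 - r := by nlinarith [sq_nonneg ((r : ℚ) - 3)]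
  rw [div_mul_eq_mul_div, div_le_iff₀ hpos]
  have gid := Stmt18.g_eq r k
  have hdesc : (r.descFactorial 3 : ℚ) = 6 * (r.choose 3 : ℚ) := by
    rw_mod_cast [Nat.descFactorial_eq_factorial_mul_choose]
    norm_num [Nat.factorial]
  rw [hdesc] at gid
  have hmul := mul_le_mul_of_nonneg_right
    (show (Stmt18.g r k : ℚ) ≤ 6 * hfin.toFinset.card by exact_mod_cast hcount) hpos.le
  rw [gid] at hmul
  have hpow : (r : ℚ) ^ (3 * k) = ((r : ℚ) ^ k) ^ 3 := by rw [mul_comm, pow_mul]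
  rw [hpow]
  linarith
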